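/- Let μ, ν ≥ 0, let 1 ≤ j_1 < … < j_μ ≤ N and 1 ≤ k_1 < … < k_ν ≤ N, and set J = {j_1, …, j_μ} and K = {k_1, …, k_ν}. If J ∪ K = {1, …, N} and J ∩ K ≠ ∅, then in the algebra Λ the product ζ_{j_1} ζ_{j_2} ⋯ ζ_{j_μ} ζ*_{k_1} ζ*_{k_2} ⋯ ζ*_{k_ν} equals 0. -/

import Mathlib

noncomputable section

open scoped BigOperators

namespace QSphere

/-- `q` viewed as a complex number. -/
def qc (q : ℝ) : ℂ := (q : ℂ)

/-- `Q = q - q⁻¹` as a complex number. -/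
def Qc (q : ℝ) : ℂ := qc q - (qc q)⁻¹

/-- The (1-based) integer index of `i : Fin N`. -/
def exZ {N : ℕ} (i : Fin N) : ℤ := (i : ℕ) + 1

/-- The R-matrix coefficient `R^{ij}_{kl}`. -/
def Rm (q : ℝ) {N : ℕ} (i j k l : Fin N) : ℂ :=
  if i = l ∧ j = k ∧ i ≠ j then 1
  else if i = j ∧ j = k ∧ k = l then qc q
  else if i = k ∧ j = l ∧ i < j then Qc q
  else 0

/-- The inverse R-matrix coefficient `(R⁻¹)^{ij}_{kl}`. -/
def Rinv (q : ℝ) {N : ℕ} (i j k l : Fin N) : ℂ :=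
  if i = l ∧ j = k ∧ i ≠ j then 1
  else if i = j ∧ j = k ∧ k = l then (qc q)⁻¹
  else if i = k ∧ j = l ∧ j < i then -(Qc q)
  else 0

/-- `R̄^{ij}_{kl} = R^{lk}_{ji}`. -/
def Rbar (q : ℝ) {N : ℕ} (i j k l : Fin N) : ℂ := Rm q l k j i

/-- `(R̄⁻¹)^{ij}_{kl} = (R⁻¹)^{lk}_{ji}`. -/
def Rbarinv (q : ℝ) {N : ℕ} (i j k l : Fin N) : ℂ := Rinv q l k j i

/-- `(R→)^{ij}_{kl} = R^{ki}_{lj}`. -/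
def Rright (q : ℝ) {N : ℕ} (i j k l : Fin N) : ℂ := Rm q k i l j

/-- `(R←⁻¹)^{ij}_{kl} = q^{2l-2i} (R⁻¹)^{jl}_{ik}`. -/
def Rlinv (q : ℝ) {N : ℕ} (i j k l : Fin N) : ℂ :=
  qc q ^ (2 * exZ l - 2 * exZ i) * Rinv q j l i k

/-- Generator index set for the differential algebra `Λ`:
`inl (inl i)` is `z_{i+1}`, `inl (inr i)` is `z*_{i+1}`,
`inr (inl i)` is `ζ_{i+1} = dz_{i+1}`, `inr (inr i)` is `ζ*_{i+1} = dz*_{i+1}`. -/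
abbrev GenL (N : ℕ) := (Fin N ⊕ Fin N) ⊕ (Fin N ⊕ Fin N)

/-- The free unital `ℂ`-algebra on the `4N` generators. -/
abbrev FB (N : ℕ) := FreeAlgebra ℂ (GenL N)

/-- The generator `z_{i+1}`. -/
def wz {N : ℕ} (i : Fin N) : FB N := FreeAlgebra.ι ℂ (Sum.inl (Sum.inl i))
/-- The generator `z*_{i+1}`. -/
def wzs {N : ℕ} (i : Fin N) : FB N := FreeAlgebra.ι ℂ (Sum.inl (Sum.inr i))
/-- The generator `ζ_{i+1}` (representing `dz_{i+1}`). -/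
def wze {N : ℕ} (i : Fin N) : FB N := FreeAlgebra.ι ℂ (Sum.inr (Sum.inl i))
/-- The generator `ζ*_{i+1}` (representing `dz*_{i+1}`). -/
def wzes {N : ℕ} (i : Fin N) : FB N := FreeAlgebra.ι ℂ (Sum.inr (Sum.inr i))

/-- `θ = q Q⁻¹ Σ_i q^{-2i} z*_i ζ_i`. -/
def thf (N : ℕ) (q : ℝ) : FB N :=
  (qc q * (Qc q)⁻¹) • ∑ i, (qc q ^ (-(2 * exZ i))) • (wzs i * wze i)

/-- The defining relations of the differential algebra `Λ` modelling the higher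
order differential calculus `Γ^∧_*` on `S_q^{2N-1}`: the two-sided ideal
generated by the listed elements is divided out. -/
inductive LambdaRel (N : ℕ) (q : ℝ) : FB N → FB N → Prop
  | r1 {i j : Fin N} (h : i < j) :
      LambdaRel N q (wz i * wz j - qc q • (wz j * wz i)) 0
  | r2 {i j : Fin N} (h : i < j) :
      LambdaRel N q (wzs i * wzs j - (qc q)⁻¹ • (wzs j * wzs i)) 0
  | r3 {i j : Fin N} (h : i ≠ j) :
      LambdaRel N q (wz i * wzs j - qc q • (wzs j * wz i)) 0
  | r4 (i : Fin N) :
      LambdaRel N q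
        (wz i * wzs i - wzs i * wz i
          + ((qc q)⁻¹ * Qc q) • ∑ k ∈ Finset.univ.filter (fun k => i < k), wz k * wzs k) 0
  | r5 : LambdaRel N q (∑ i, wz i * wzs i - 1) 0
  | r6 : LambdaRel N q
      (∑ i, wz i * wzes i + ∑ i, (qc q ^ (-(2 * exZ i))) • (wzs i * wze i)) 0
  | r7 (k l : Fin N) :
      LambdaRel N q
        (wze k * wz l - qc q • ∑ a, ∑ b, Rm q a b k l • (wz a * wze b)) 0
  | r8 (k l : Fin N) :
      LambdaRel N q
        (wzes k * wzs l - (qc q)⁻¹ • ∑ a, ∑ b, Rbarinv q a b k l • (wzs a * wzes b)) 0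
  | r9 (k l : Fin N) :
      LambdaRel N q
        (wze k * wzs l - (qc q)⁻¹ • ∑ a, ∑ b, Rlinv q a b k l • (wzs a * wze b)
          - (qc q * Qc q) • (wz k * wzes l)
          - (Qc q ^ 2) • (wz k * wzs l * thf N q)) 0
  | r10 (k l : Fin N) :
      LambdaRel N q
        (wzes k * wz l - qc q • ∑ a, ∑ b, Rright q a b k l • (wz a * wzes b)
          + ((qc q)⁻¹ * Qc q) • (wzs k * wze l)
          - (Qc q ^ 2) • (wzs k * wz l * thf N q)) 0
  | r11 (k l : Fin N) :
      LambdaRel N q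
        (wze k * wze l + qc q • ∑ a, ∑ b, Rm q a b k l • (wze a * wze b)) 0
  | r12 (k l : Fin N) :
      LambdaRel N q
        (wzes k * wzes l + (qc q)⁻¹ • ∑ a, ∑ b, Rbarinv q a b k l • (wzes a * wzes b)) 0
  | r13 (k l : Fin N) :
      LambdaRel N q
        ((qc q ^ (-3:ℤ)) • ∑ a, ∑ b, Rlinv q a b k l •
            (wzes a * wze b + (Qc q ^ 2) • (wzs a * wze b * thf N q))
          + wze k * wzes l + (Qc q ^ 2) • (wz k * wzes l * thf N q)
          + (Qc q ^ 2 * (Qc q ^ 2 + 1)) • (wz k * wzs l * thf N q * thf N q)) 0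
  | r14 : LambdaRel N q
      (∑ i, wze i * wzes i + ∑ i, (qc q ^ (-(2 * exZ i))) • (wzes i * wze i)) 0
  | r15 : LambdaRel N q (∑ i, (qc q ^ (-(2 * exZ i))) • (wzes i * wze i)) 0
  | r16 : LambdaRel N q (thf N q * thf N q) 0
  | r17 (k : Fin N) : LambdaRel N q (thf N q * wze k + wze k * thf N q) 0
  | r18 (k : Fin N) : LambdaRel N q (thf N q * wzes k + wzes k * thf N q) 0

/-- The differential algebra `Λ` modelling `Γ^∧_*`. -/
abbrev Lam (N : ℕ) (q : ℝ) := RingQuot (LambdaRel N q)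

/-- The one-form `ζ_i = dz_i` in `Λ`. -/
def Zeta (N : ℕ) (q : ℝ) (i : Fin N) : Lam N q :=
  RingQuot.mkAlgHom ℂ (LambdaRel N q) (wze i)

/-- The one-form `ζ*_i = dz*_i` in `Λ`. -/
def Zetas (N : ℕ) (q : ℝ) (i : Fin N) : Lam N q :=
  RingQuot.mkAlgHom ℂ (LambdaRel N q) (wzes i)

/-- The `(2N-2)`-form `Θ_j`: the ordered product of all `ζ_i`, `i ≠ j`,
followed by the ordered product of all `ζ*_i`, `i ≠ j`. -/
def ThetaJ (N : ℕ) (q : ℝ) (j : Fin N) : Lam N q :=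
  (((Finset.univ.erase j).sort (· ≤ ·)).map (Zeta N q)).prod *
  (((Finset.univ.erase j).sort (· ≤ ·)).map (Zetas N q)).prod


/-! ### Auxiliary lemmas for Statement 17 -/

section Stmt17Aux

variable {N : ℕ} {q : ℝ}

private lemma dsum_single {M : Type*} [AddCommMonoid M] (g : Fin N → Fin N → M) (a0 b0 : Fin N)
    (hz : ∀ a b, ¬(a = a0 ∧ b = b0) → g a b = 0) :
    (∑ a, ∑ b, g a b) = g a0 b0 := by
  have h2 : (∑ b, g a0 b) = g a0 b0 :=
    Finset.sum_eq_single b0 (fun b _ hb => hz a0 b (fun h => hb h.2))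
      (fun h => absurd (Finset.mem_univ _) h)
  rw [Finset.sum_eq_single a0
      (fun a _ ha => Finset.sum_eq_zero fun b _ => hz a b (fun h => ha h.1))
      (fun h => absurd (Finset.mem_univ _) h), h2]

private lemma dsum_pair {M : Type*} [AddCommMonoid M] (g : Fin N → Fin N → M)
    (a0 b0 a1 b1 : Fin N) (ha : a0 ≠ a1)
    (hz : ∀ a b, ¬(a = a0 ∧ b = b0) → ¬(a = a1 ∧ b = b1) → g a b = 0) :
    (∑ a, ∑ b, g a b) = g a0 b0 + g a1 b1 := by
  have house : ∀ x ∈ (Finset.univ : Finset (Fin N)),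
      x ∉ ({a0, a1} : Finset (Fin N)) → (∑ b, g x b) = 0 := by
    intro x _ hx
    simp only [Finset.mem_insert, Finset.mem_singleton] at hx
    push_neg at hx
    exact Finset.sum_eq_zero fun b _ => hz x b (fun h => hx.1 h.1) (fun h => hx.2 h.1)
  rw [← Finset.sum_subset (Finset.subset_univ ({a0, a1} : Finset (Fin N))) house,
    Finset.sum_pair ha]
  congr 1
  · exact Finset.sum_eq_single b0 (fun b _ hb => hz a0 b (fun h => hb h.2) (fun h => ha h.1))
      (fun h => absurd (Finset.mem_univ _) h)
  · exact Finset.sum_eq_single b1 (fun b _ hb => hz a1 b (fun h => ha h.1.symm) (fun h => hb h.2))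
      (fun h => absurd (Finset.mem_univ _) h)

/-- Evaluation of R-matrix coefficients. -/
private lemma Rm_diag_eq (k : Fin N) : Rm q k k k k = qc q := by
  simp [Rm]

private lemma Rm_diag_zero (k a b : Fin N) (h : ¬(a = k ∧ b = k)) : Rm q a b k k = 0 := by
  unfold Rm
  split_ifs with h1 h2 h3
  · exact absurd (h1.1.trans h1.2.1.symm) h1.2.2
  · exact absurd ⟨h2.1.trans h2.2.1, h2.2.1⟩ h
  · exact absurd h3.2.2 (by rw [h3.1, h3.2.1]; exact lt_irrefl k)
  · rfl

private lemma Rm_pair1 (i j : Fin N) (hij : i ≠ j) : Rm q j i i j = 1 := by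
  simp [Rm, hij.symm]

private lemma Rm_pair2 (i j : Fin N) (hij : i < j) : Rm q i j i j = Qc q := by
  have h1 : ¬(i = j ∧ j = i ∧ i ≠ j) := fun h => h.2.2 h.1
  have h2 : ¬(i = j ∧ j = i ∧ i = j) := fun h => (hij.ne h.1)
  simp [Rm, h1, h2, hij, hij.ne]

private lemma Rm_offdiag_zero (i j : Fin N) (hij : i < j) (a b : Fin N)
    (h1 : ¬(a = j ∧ b = i)) (h2 : ¬(a = i ∧ b = j)) : Rm q a b i j = 0 := by
  unfold Rm
  split_ifs with c1 c2 c3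
  · exact absurd ⟨c1.1, c1.2.1⟩ h1
  · exact absurd (c2.2.2) hij.ne
  · exact absurd ⟨c3.1, c3.2.1⟩ h2
  · rfl

private lemma Rbarinv_diag_eq (k : Fin N) : Rbarinv q k k k k = (qc q)⁻¹ := by
  simp [Rbarinv, Rinv]

private lemma Rbarinv_diag_zero (k a b : Fin N) (h : ¬(a = k ∧ b = k)) :
    Rbarinv q a b k k = 0 := by
  unfold Rbarinv Rinv
  split_ifs with h1 h2 h3
  · exact absurd rfl h1.2.2
  · exact absurd ⟨h2.2.2.symm.trans h2.2.1.symm, h2.2.1.symm⟩ h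
  · exact absurd h3.2.2 (lt_irrefl k)
  · rfl

private lemma Rbarinv_pair1 (i j : Fin N) (hij : i ≠ j) : Rbarinv q j i i j = 1 := by
  simp [Rbarinv, Rinv, hij.symm]

private lemma Rbarinv_pair2 (i j : Fin N) (hij : i < j) : Rbarinv q i j i j = -(Qc q) := by
  have h1 : ¬(j = i ∧ i = j ∧ j ≠ i) := fun h => h.2.2 h.1.symm.symm
  have h2 : ¬(j = i) := hij.ne'
  unfold Rbarinv Rinv
  rw [if_neg (fun h => h2 h.1), if_neg (fun h => h2 h.1), if_pos ⟨rfl, rfl, hij⟩]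

private lemma Rbarinv_offdiag_zero (i j : Fin N) (hij : i < j) (a b : Fin N)
    (h1 : ¬(a = j ∧ b = i)) (h2 : ¬(a = i ∧ b = j)) : Rbarinv q a b i j = 0 := by
  unfold Rbarinv Rinv
  split_ifs with c1 c2 c3
  · exact absurd ⟨c1.1.symm, c1.2.1.symm⟩ h1
  · exact absurd c2.1 hij.ne'
  · exact absurd ⟨c3.2.1.symm, c3.1.symm⟩ h2
  · rfl

end Stmt17Aux


section Stmt17Quot

variable {N : ℕ} {q : ℝ}

private lemma mk_rel_zero {x : FB N} (h : LambdaRel N q x 0) :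
    RingQuot.mkAlgHom ℂ (LambdaRel N q) x = 0 := by
  rw [RingQuot.mkAlgHom_rel ℂ h, map_zero]

private lemma qc_ne (hq0 : q ≠ 0) : qc q ≠ 0 := by
  simpa [qc] using Complex.ofReal_ne_zero.mpr hq0

private lemma zz_rel11 (k l : Fin N) :
    Zeta N q k * Zeta N q l
      + qc q • ∑ a, ∑ b, Rm q a b k l • (Zeta N q a * Zeta N q b) = 0 := by
  have h := mk_rel_zero (LambdaRel.r11 (N := N) (q := q) k l)
  simpa only [map_add, map_mul, map_smul, map_sum, Zeta] using h

private lemma ff_rel12 (k l : Fin N) :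
    Zetas N q k * Zetas N q l
      + (qc q)⁻¹ • ∑ a, ∑ b, Rbarinv q a b k l • (Zetas N q a * Zetas N q b) = 0 := by
  have h := mk_rel_zero (LambdaRel.r12 (N := N) (q := q) k l)
  simpa only [map_add, map_mul, map_smul, map_sum, Zetas] using h

private lemma one_add_qq_ne : (1 : ℂ) + qc q * qc q ≠ 0 := by
  have h0 : ((1 + q * q : ℝ) : ℂ) ≠ 0 :=
    Complex.ofReal_ne_zero.mpr (ne_of_gt (by nlinarith [mul_self_nonneg q]))
  simpa [qc, Complex.ofReal_add, Complex.ofReal_mul] using h0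

private lemma one_add_qiqi_ne : (1 : ℂ) + (qc q)⁻¹ * (qc q)⁻¹ ≠ 0 := by
  have h0 : ((1 + q⁻¹ * q⁻¹ : ℝ) : ℂ) ≠ 0 :=
    Complex.ofReal_ne_zero.mpr (ne_of_gt (by nlinarith [mul_self_nonneg q⁻¹]))
  simpa [qc, Complex.ofReal_add, Complex.ofReal_mul, Complex.ofReal_inv] using h0

private lemma zeta_sq (i : Fin N) : Zeta N q i * Zeta N q i = 0 := by
  have h := zz_rel11 (q := q) i i
  have hs : (∑ a, ∑ b, Rm q a b i i • (Zeta N q a * Zeta N q b))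
      = qc q • (Zeta N q i * Zeta N q i) := by
    rw [dsum_single _ i i (fun a b hab => by rw [Rm_diag_zero i a b hab, zero_smul]),
      Rm_diag_eq]
  rw [hs, smul_smul] at h
  have h2 : ((1 : ℂ) + qc q * qc q) • (Zeta N q i * Zeta N q i) = 0 := by
    rw [add_smul, one_smul]; exact h
  calc Zeta N q i * Zeta N q i
      = ((1 : ℂ) + qc q * qc q)⁻¹ • (((1 : ℂ) + qc q * qc q) • (Zeta N q i * Zeta N q i)) := by
        rw [smul_smul, inv_mul_cancel₀ one_add_qq_ne, one_smul]
    _ = 0 := by rw [h2, smul_zero]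

private lemma zetas_sq (i : Fin N) : Zetas N q i * Zetas N q i = 0 := by
  have h := ff_rel12 (q := q) i i
  have hs : (∑ a, ∑ b, Rbarinv q a b i i • (Zetas N q a * Zetas N q b))
      = (qc q)⁻¹ • (Zetas N q i * Zetas N q i) := by
    rw [dsum_single _ i i (fun a b hab => by rw [Rbarinv_diag_zero i a b hab, zero_smul]),
      Rbarinv_diag_eq]
  rw [hs, smul_smul] at h
  have h2 : ((1 : ℂ) + (qc q)⁻¹ * (qc q)⁻¹) • (Zetas N q i * Zetas N q i) = 0 := by
    rw [add_smul, one_smul]; exact h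
  calc Zetas N q i * Zetas N q i
      = ((1 : ℂ) + (qc q)⁻¹ * (qc q)⁻¹)⁻¹
          • (((1 : ℂ) + (qc q)⁻¹ * (qc q)⁻¹) • (Zetas N q i * Zetas N q i)) := by
        rw [smul_smul, inv_mul_cancel₀ one_add_qiqi_ne, one_smul]
    _ = 0 := by rw [h2, smul_zero]

private lemma zeta_swap (hq0 : q ≠ 0) {i j : Fin N} (hij : i < j) :
    Zeta N q j * Zeta N q i = (-(qc q)) • (Zeta N q i * Zeta N q j) := by
  have h := zz_rel11 (q := q) i j
  have hs : (∑ a, ∑ b, Rm q a b i j • (Zeta N q a * Zeta N q b))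
      = (1 : ℂ) • (Zeta N q j * Zeta N q i) + Qc q • (Zeta N q i * Zeta N q j) := by
    rw [dsum_pair _ j i i j hij.ne'
      (fun a b h1 h2 => by rw [Rm_offdiag_zero i j hij a b h1 h2, zero_smul]),
      Rm_pair1 i j hij.ne, Rm_pair2 i j hij]
  rw [hs] at h
  have h2 : qc q • (Zeta N q j * Zeta N q i)
      + ((1 : ℂ) + qc q * Qc q) • (Zeta N q i * Zeta N q j) = 0 := by
    rw [← h]; module
  have h5 : Zeta N q j * Zeta N q i
      = (-(qc q)) • (Zeta N q i * Zeta N q j)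
        + (qc q)⁻¹ • (qc q • (Zeta N q j * Zeta N q i)
            + ((1 : ℂ) + qc q * Qc q) • (Zeta N q i * Zeta N q j)) := by
    have hqc := qc_ne (q := q) hq0
    match_scalars
    all_goals try simp only [Qc]
    all_goals field_simp
    all_goals ring
  rw [h2, smul_zero, add_zero] at h5
  exact h5

private lemma zetas_swap (hq0 : q ≠ 0) {i j : Fin N} (hij : i < j) :
    Zetas N q j * Zetas N q i = (-(qc q)⁻¹) • (Zetas N q i * Zetas N q j) := by
  have h := ff_rel12 (q := q) i j
  have hs : (∑ a, ∑ b, Rbarinv q a b i j • (Zetas N q a * Zetas N q b))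
      = (1 : ℂ) • (Zetas N q j * Zetas N q i) + (-(Qc q)) • (Zetas N q i * Zetas N q j) := by
    rw [dsum_pair _ j i i j hij.ne'
      (fun a b h1 h2 => by rw [Rbarinv_offdiag_zero i j hij a b h1 h2, zero_smul]),
      Rbarinv_pair1 i j hij.ne, Rbarinv_pair2 i j hij]
  rw [hs] at h
  have h2 : (qc q)⁻¹ • (Zetas N q j * Zetas N q i)
      + ((1 : ℂ) - (qc q)⁻¹ * Qc q) • (Zetas N q i * Zetas N q j) = 0 := by
    rw [← h]; module
  have h5 : Zetas N q j * Zetas N q i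
      = (-(qc q)⁻¹) • (Zetas N q i * Zetas N q j)
        + qc q • ((qc q)⁻¹ • (Zetas N q j * Zetas N q i)
            + ((1 : ℂ) - (qc q)⁻¹ * Qc q) • (Zetas N q i * Zetas N q j)) := by
    have hqc := qc_ne (q := q) hq0
    match_scalars
    all_goals try simp only [Qc]
    all_goals field_simp
    all_goals ring
  rw [h2, smul_zero, add_zero] at h5
  exact h5

private lemma sum_zeta_zetas :
    (∑ i, Zeta N q i * Zetas N q i) = 0 := by
  have h14 := mk_rel_zero (LambdaRel.r14 (N := N) (q := q))
  have h15 := mk_rel_zero (LambdaRel.r15 (N := N) (q := q))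
  simp only [map_add, map_mul, map_smul, map_sum, Zeta, Zetas] at h14 h15
  rw [h15, add_zero] at h14
  exact h14

end Stmt17Quot


section Stmt17Lists

variable {N : ℕ} {q : ℝ}

private lemma zeta_comm_ex (hq0 : q ≠ 0) {i j : Fin N} (hij : i ≠ j) :
    ∃ c : ℂ, Zeta N q i * Zeta N q j = c • (Zeta N q j * Zeta N q i) := by
  rcases lt_or_gt_of_ne hij with h | h
  · refine ⟨(-(qc q))⁻¹, ?_⟩
    rw [zeta_swap hq0 h, smul_smul, inv_mul_cancel₀ (neg_ne_zero.mpr (qc_ne hq0)), one_smul]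
  · exact ⟨-(qc q), zeta_swap hq0 h⟩

private lemma zetas_comm_ex (hq0 : q ≠ 0) {i j : Fin N} (hij : i ≠ j) :
    ∃ c : ℂ, Zetas N q i * Zetas N q j = c • (Zetas N q j * Zetas N q i) := by
  rcases lt_or_gt_of_ne hij with h | h
  · refine ⟨(-(qc q)⁻¹)⁻¹, ?_⟩
    rw [zetas_swap hq0 h, smul_smul,
      inv_mul_cancel₀ (neg_ne_zero.mpr (inv_ne_zero (qc_ne hq0))), one_smul]
  · exact ⟨-(qc q)⁻¹, zetas_swap hq0 h⟩

private lemma zeta_sandwich (hq0 : q ≠ 0) (i : Fin N) (l : List (Fin N)) :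
    Zeta N q i * ((l.map (Zeta N q)).prod * Zeta N q i) = 0 := by
  induction l with
  | nil => simpa using zeta_sq (q := q) i
  | cons b t ih =>
    rw [List.map_cons, List.prod_cons, mul_assoc]
    by_cases hbi : b = i
    · subst hbi
      rw [← mul_assoc, zeta_sq, zero_mul]
    · obtain ⟨c, hc⟩ := zeta_comm_ex hq0 (fun h => hbi h.symm)
      rw [← mul_assoc, hc, smul_mul_assoc, mul_assoc, ih, mul_zero, smul_zero]

private lemma prod_mul_zeta_of_mem (hq0 : q ≠ 0) {l : List (Fin N)} {i : Fin N} (h : i ∈ l) :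
    (l.map (Zeta N q)).prod * Zeta N q i = 0 := by
  induction l with
  | nil => exact absurd h (List.not_mem_nil)
  | cons b t ih =>
    rw [List.map_cons, List.prod_cons, mul_assoc]
    rcases List.mem_cons.mp h with hb | ht
    · subst hb
      exact zeta_sandwich hq0 i t
    · rw [ih ht, mul_zero]

private lemma zetas_mul_prod_of_mem (hq0 : q ≠ 0) {l : List (Fin N)} {i : Fin N} (h : i ∈ l) :
    Zetas N q i * (l.map (Zetas N q)).prod = 0 := by
  induction l with
  | nil => exact absurd h (List.not_mem_nil)
  | cons b t ih =>
    rw [List.map_cons, List.prod_cons]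
    by_cases hib : i = b
    · subst hib
      rw [← mul_assoc, zetas_sq, zero_mul]
    · have ht : i ∈ t := (List.mem_cons.mp h).resolve_left hib
      obtain ⟨c, hc⟩ := zetas_comm_ex hq0 hib
      rw [← mul_assoc, hc, smul_mul_assoc, mul_assoc, ih ht, mul_zero, smul_zero]

private lemma zeta_move_right (hq0 : q ≠ 0) (m : Fin N) (t : List (Fin N)) (hmt : m ∉ t) :
    ∃ c : ℂ, Zeta N q m * (t.map (Zeta N q)).prod
      = c • ((t.map (Zeta N q)).prod * Zeta N q m) := by
  induction t with
  | nil => exact ⟨1, by simp⟩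
  | cons b s ih =>
    have hmb : m ≠ b := fun h => hmt (h ▸ List.mem_cons_self)
    have hms : m ∉ s := fun h => hmt (List.mem_cons_of_mem b h)
    obtain ⟨c1, h1⟩ := zeta_comm_ex hq0 hmb
    obtain ⟨c2, h2⟩ := ih hms
    refine ⟨c1 * c2, ?_⟩
    rw [List.map_cons, List.prod_cons, ← mul_assoc, h1, smul_mul_assoc, mul_assoc, h2,
      mul_smul_comm, smul_smul, ← mul_assoc]

private lemma prod_zeta_extract (hq0 : q ≠ 0) {l : List (Fin N)} (hd : l.Nodup) {m : Fin N}
    (hm : m ∈ l) :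
    ∃ c : ℂ, (l.map (Zeta N q)).prod
      = c • (((l.erase m).map (Zeta N q)).prod * Zeta N q m) := by
  induction l with
  | nil => exact absurd hm (List.not_mem_nil)
  | cons b t ih =>
    by_cases hbm : b = m
    · subst hbm
      rw [List.erase_cons_head, List.map_cons, List.prod_cons]
      exact zeta_move_right hq0 b t (List.nodup_cons.mp hd).1
    · have hm' : m ∈ t := (List.mem_cons.mp hm).resolve_left (fun h => hbm h.symm)
      obtain ⟨c, hc⟩ := ih (List.nodup_cons.mp hd).2 hm'
      refine ⟨c, ?_⟩
      rw [List.erase_cons_tail, List.map_cons, List.prod_cons, List.map_cons, List.prod_cons,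
        hc, mul_smul_comm, mul_assoc]
      · simp [hbm]

private lemma prod_zetas_extract (hq0 : q ≠ 0) {l : List (Fin N)} (hd : l.Nodup) {m : Fin N}
    (hm : m ∈ l) :
    ∃ c : ℂ, (l.map (Zetas N q)).prod
      = c • (Zetas N q m * ((l.erase m).map (Zetas N q)).prod) := by
  induction l with
  | nil => exact absurd hm (List.not_mem_nil)
  | cons b t ih =>
    by_cases hbm : b = m
    · subst hbm
      rw [List.erase_cons_head]
      exact ⟨1, by rw [List.map_cons, List.prod_cons, one_smul]⟩
    · have hm' : m ∈ t := (List.mem_cons.mp hm).resolve_left (fun h => hbm h.symm)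
      obtain ⟨c, hc⟩ := ih (List.nodup_cons.mp hd).2 hm'
      obtain ⟨c1, h1⟩ := zetas_comm_ex hq0 hbm
      refine ⟨c * c1, ?_⟩
      rw [List.erase_cons_tail, List.map_cons, List.prod_cons, List.map_cons, List.prod_cons,
        hc, mul_smul_comm, ← mul_assoc, h1, smul_mul_assoc, smul_smul, mul_assoc]
      · simp [hbm]

end Stmt17Lists

end QSphere

open QSphere in
/-- if `J ∪ K = {1,…,N}` and `J ∩ K ≠ ∅`, then the product
`ζ_{j_1}⋯ζ_{j_μ} ζ*_{k_1}⋯ζ*_{k_ν}` (indices in increasing order) vanishes in `Λ`. -/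
theorem stmt17 (N : ℕ) (hN : 2 ≤ N) (q : ℝ) (hq : q ≠ -1 ∧ q ≠ 0 ∧ q ≠ 1)
    (J K : Finset (Fin N)) (hUnion : J ∪ K = Finset.univ) (hInter : (J ∩ K).Nonempty) :
    ((J.sort (· ≤ ·)).map (Zeta N q)).prod * ((K.sort (· ≤ ·)).map (Zetas N q)).prod
      = 0 := by
  obtain ⟨m, hm⟩ := hInter
  rw [Finset.mem_inter] at hm
  have hq0 : q ≠ 0 := hq.2.1
  have hmJ : m ∈ J.sort (· ≤ ·) := (Finset.mem_sort _).mpr hm.1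
  have hmK : m ∈ K.sort (· ≤ ·) := (Finset.mem_sort _).mpr hm.2
  obtain ⟨c1, h1⟩ := prod_zeta_extract hq0 (J.sort_nodup (· ≤ ·)) hmJ
  obtain ⟨c2, h2⟩ := prod_zetas_extract hq0 (K.sort_nodup (· ≤ ·)) hmK
  set A : Lam N q := (((J.sort (· ≤ ·)).erase m).map (Zeta N q)).prod with hA
  set B : Lam N q := (((K.sort (· ≤ ·)).erase m).map (Zetas N q)).prod with hB
  rw [h1, h2, smul_mul_assoc, mul_smul_comm, smul_smul]
  have key : Zeta N q m * Zetas N q m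
      + ∑ i ∈ Finset.univ.erase m, Zeta N q i * Zetas N q i = 0 := by
    have hs := sum_zeta_zetas (N := N) (q := q)
    rw [← Finset.add_sum_erase Finset.univ _ (Finset.mem_univ m)] at hs
    exact hs
  have hterms : ∑ i ∈ Finset.univ.erase m, A * ((Zeta N q i * Zetas N q i) * B) = 0 := by
    apply Finset.sum_eq_zero
    intro i hi
    have him : i ≠ m := (Finset.mem_erase.mp hi).1
    have hiJK : i ∈ J ∪ K := by rw [hUnion]; exact Finset.mem_univ i
    rcases Finset.mem_union.mp hiJK with hiJ | hiK
    · have hmem : i ∈ (J.sort (· ≤ ·)).erase m :=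
        (List.mem_erase_of_ne him).mpr ((Finset.mem_sort _).mpr hiJ)
      have hz : A * Zeta N q i = 0 := prod_mul_zeta_of_mem hq0 hmem
      rw [← mul_assoc, ← mul_assoc, hz, zero_mul, zero_mul]
    · have hmem : i ∈ (K.sort (· ≤ ·)).erase m :=
        (List.mem_erase_of_ne him).mpr ((Finset.mem_sort _).mpr hiK)
      have hz : Zetas N q i * B = 0 := zetas_mul_prod_of_mem hq0 hmem
      rw [mul_assoc, hz, mul_zero, mul_zero]
  have main : A * Zeta N q m * (Zetas N q m * B) = 0 := by
    calc A * Zeta N q m * (Zetas N q m * B)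
        = A * ((Zeta N q m * Zetas N q m) * B)
          + ∑ i ∈ Finset.univ.erase m, A * ((Zeta N q i * Zetas N q i) * B) := by
          rw [hterms, add_zero]
          simp only [mul_assoc]
      _ = A * ((Zeta N q m * Zetas N q m
            + ∑ i ∈ Finset.univ.erase m, Zeta N q i * Zetas N q i) * B) := by
          rw [add_mul, mul_add, Finset.sum_mul, Finset.mul_sum]
      _ = A * (0 * B) := by rw [key]
      _ = 0 := by rw [zero_mul, mul_zero]
  rw [main, smul_zero]
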